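/- Let X be a measurable space and equip Measure X with its canonical measurable-space structure. Let P : X → Prop be an arbitrary predicate and δ₁, δ₂ ∈ [0,1]. Let Ξ be a probability measure on Measure X such that Ξ {ν | ν is a probability measure} = 1. If Ξ satisfies the union-bound lifting UB(δ₁) applied to the predicate 'ν satisfies UB(δ₂)(P)' on Measure X, then the join Ξ.join (the measure A ↦ ∫⁻ ν A dΞ(ν)) satisfies UB(δ₁ + δ₂)(P). (This is the multiplication law of the union-bound graded lifting, proved via Markov's inequality.) -/

import Mathlib

open MeasureTheory ENNReal

/-- The union-bound graded lifting: a (probability) measure `ν` on `X` satisfies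
`UB δ P` iff for every measurable Boolean test `f` that is `true` whenever `P` holds,
the measure of `{x | f x = true}` is at least `1 - δ`. -/
def UB {X : Type*} [MeasurableSpace X] (δ : ℝ≥0∞) (P : X → Prop) (ν : Measure X) : Prop :=
  ∀ f : X → Bool, Measurable f → (∀ x, P x → f x = true) → 1 - δ ≤ ν {x | f x = true}

lemma one_sub_add_le {a b : ℝ≥0∞} (ha : a ≤ 1) (hb : b ≤ 1) :
    1 - (a + b) ≤ (1 - a) * (1 - b) := by
  have h1 : 1 - (a + b) = (1 - a) - b := by rw [tsub_add_eq_tsub_tsub]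
  rw [h1]
  have h2 : (1 - a) * b ≤ b := mul_le_of_le_one_left zero_le tsub_le_self
  calc (1 - a) - b ≤ (1 - a) - (1 - a) * b := tsub_le_tsub_left h2 _
    _ = (1 - a) * 1 - (1 - a) * b := by rw [mul_one]
    _ = (1 - a) * (1 - b) := by
        rw [ENNReal.mul_sub (fun _ _ => by
          exact (lt_of_le_of_lt tsub_le_self one_lt_top).ne)]

/-- Multiplication law of the union-bound graded lifting (proved via Markov's inequality). -/
theorem UB_join {X : Type*} [MeasurableSpace X] (P : X → Prop) (δ₁ δ₂ : ℝ≥0∞)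
    (hδ₁ : δ₁ ≤ 1) (hδ₂ : δ₂ ≤ 1)
    (Ξ : Measure (Measure X)) [IsProbabilityMeasure Ξ]
    (hprob : Ξ {ν : Measure X | IsProbabilityMeasure ν} = 1)
    (hΞ : UB δ₁ (fun ν : Measure X => UB δ₂ P ν) Ξ) :
    UB (δ₁ + δ₂) P Ξ.join := by
  classical
  intro f hf hfP
  have hS : MeasurableSet {x | f x = true} := hf (measurableSet_singleton true)
  set S := {x | f x = true} with hSdef
  set G : Set (Measure X) := {ν | 1 - δ₂ ≤ ν S} with hGdef
  have hGmeas : MeasurableSet G := (Measure.measurable_coe hS) measurableSet_Ici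
  -- boolean test on measures
  set g : Measure X → Bool := fun ν => decide (1 - δ₂ ≤ ν S) with hg
  have hgmeas : Measurable g := by
    apply measurable_to_countable'
    intro b
    cases b
    · have : g ⁻¹' {false} = Gᶜ := by
        ext ν; simp [g, G]
      rw [this]; exact hGmeas.compl
    · have : g ⁻¹' {true} = G := by
        ext ν; simp [g, G]
      rw [this]; exact hGmeas
  have hgP : ∀ ν : Measure X, UB δ₂ P ν → g ν = true := by
    intro ν hν
    simp only [g, decide_eq_true_eq]
    exact hν f hf hfP
  have hΞG : 1 - δ₁ ≤ Ξ {ν | g ν = true} := hΞ g hgmeas hgP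
  have hsetG : {ν | g ν = true} = G := by ext ν; simp [g, G]
  rw [hsetG] at hΞG
  rw [Measure.join_apply hS]
  calc 1 - (δ₁ + δ₂) ≤ (1 - δ₁) * (1 - δ₂) := one_sub_add_le hδ₁ hδ₂
    _ ≤ Ξ G * (1 - δ₂) := by gcongr
    _ = (1 - δ₂) * Ξ G := mul_comm _ _
    _ = ∫⁻ ν in G, (1 - δ₂) ∂Ξ := (setLIntegral_const G _).symm
    _ ≤ ∫⁻ ν in G, ν S ∂Ξ := setLIntegral_mono (Measure.measurable_coe hS) (fun ν hν => hν)
    _ ≤ ∫⁻ ν, ν S ∂Ξ := setLIntegral_le_lintegral _ _
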